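/- Fix Θ_* ∈ ℝ^{m×q}, μ > 0, 0 < β < 2, 0 < γ < √((2−β)/β), and suppose α := 2(1−γ) − γ(2−3β)²/(β(2−(1+γ²)β)) > 0. Let (φ_k)_{k≥0} be any sequence in ℝ^q and run the high-order tuner: N_k = max{μ, ‖φ_k‖²}, ε_{k+1} = (Θ̂_k − Θ_*)φ_k, Θ̄_k = Θ̂_k − (γβ/N_k) ε_{k+1} φ_k^⊤, Θ̂_{k+1} = Θ̄_k − β(Θ̄_k − Ξ̂_k), Ξ̂_{k+1} = Ξ̂_k − (γ/N_k)((Θ̂_{k+1} − Θ̂_k)φ_k + ε_{k+1})φ_k^⊤, initialized with Ξ̂_0 = Θ̂_0. Then V_k = ‖Ξ̂_k − Θ_*‖_F² + ‖Θ̂_k − Ξ̂_k‖_F² satisfies V_{k+1} − V_k ≤ −γα(1−γβ)² (2/(2+α)) ‖ε_{k+1}‖²/N_k ≤ 0 for all k. -/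

import Mathlib

open scoped BigOperators

private lemma sum_comb2 {n : ℕ} (f g : Fin n → ℝ) (c1 c2 : ℝ) :
    ∑ i, (c1 * f i + c2 * g i) = c1 * (∑ i, f i) + c2 * (∑ i, g i) := by
  rw [Finset.sum_add_distrib, ← Finset.mul_sum, ← Finset.mul_sum]

private lemma sum_comb3 {n : ℕ} (f g h : Fin n → ℝ) (c1 c2 c3 : ℝ) :
    ∑ i, (c1 * f i + c2 * g i + c3 * h i)
      = c1 * (∑ i, f i) + c2 * (∑ i, g i) + c3 * (∑ i, h i) := by
  rw [Finset.sum_add_distrib, Finset.sum_add_distrib, ← Finset.mul_sum, ← Finset.mul_sum,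
    ← Finset.mul_sum]

private lemma sum_fro_expand {m q : ℕ} (M : Fin m → Fin q → ℝ) (v : Fin m → ℝ)
    (y : Fin q → ℝ) (c : ℝ) :
    ∑ i, ∑ j, (M i j + c * (v i * y j)) ^ 2
      = (∑ i, ∑ j, (M i j) ^ 2) + 2 * c * (∑ i, v i * (∑ j, M i j * y j))
        + c ^ 2 * (∑ i, (v i) ^ 2) * (∑ j, (y j) ^ 2) := by
  have hrow : ∀ i, ∑ j, (M i j + c * (v i * y j)) ^ 2
      = 1 * (∑ j, (M i j) ^ 2) + (2 * c * v i) * (∑ j, M i j * y j)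
        + (c ^ 2 * (v i) ^ 2) * (∑ j, (y j) ^ 2) := by
    intro i
    rw [← sum_comb3 (fun j => (M i j) ^ 2) (fun j => M i j * y j) (fun j => (y j) ^ 2)]
    exact Finset.sum_congr rfl fun j _ => by ring
  calc ∑ i, ∑ j, (M i j + c * (v i * y j)) ^ 2
      = ∑ i, (1 * (∑ j, (M i j) ^ 2) + (2 * c) * (v i * (∑ j, M i j * y j))
          + (c ^ 2 * (∑ j, (y j) ^ 2)) * ((v i) ^ 2)) :=
        Finset.sum_congr rfl fun i _ => by rw [hrow i]; ring
    _ = 1 * (∑ i, ∑ j, (M i j) ^ 2) + (2 * c) * (∑ i, v i * (∑ j, M i j * y j))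
          + (c ^ 2 * (∑ j, (y j) ^ 2)) * (∑ i, (v i) ^ 2) :=
        sum_comb3 _ _ _ _ _ _
    _ = _ := by ring

private lemma sum_bilin {m : ℕ} (u v : Fin m → ℝ) (c1 c2 c3 c4 : ℝ) :
    ∑ i, ((c1 * u i + c2 * v i) * (c3 * u i + c4 * v i))
      = (c1 * c3) * (∑ i, (u i) ^ 2) + (c1 * c4 + c2 * c3) * (∑ i, u i * v i)
        + (c2 * c4) * (∑ i, (v i) ^ 2) := by
  rw [← sum_comb3 (fun i => (u i) ^ 2) (fun i => u i * v i) (fun i => (v i) ^ 2)]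
  exact Finset.sum_congr rfl fun i _ => by ring

set_option maxHeartbeats 1000000 in
theorem hot_lyapunov_decrease {m q : ℕ}
    (Θstar : Matrix (Fin m) (Fin q) ℝ) (μ γ β : ℝ)
    (hμ : 0 < μ) (hβ0 : 0 < β) (hβ2 : β < 2)
    (hγ0 : 0 < γ) (hγ : γ < Real.sqrt ((2 - β) / β))
    (hα : 0 < 2 * (1 - γ) - γ * (2 - 3 * β) ^ 2 / (β * (2 - (1 + γ ^ 2) * β)))
    (φ : ℕ → Fin q → ℝ)
    (Θhat Ξhat Θbar : ℕ → Matrix (Fin m) (Fin q) ℝ)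
    (N : ℕ → ℝ) (hN : ∀ k, N k = max μ (∑ j, φ k j ^ 2))
    (ε : ℕ → Fin m → ℝ) (hε : ∀ k, ε (k + 1) = (Θhat k - Θstar).mulVec (φ k))
    (hΘbar : ∀ k, Θbar k
      = Θhat k - (γ * β / N k) • Matrix.vecMulVec (ε (k + 1)) (φ k))
    (hΘ : ∀ k, Θhat (k + 1) = Θbar k - β • (Θbar k - Ξhat k))
    (hΞ : ∀ k, Ξhat (k + 1) = Ξhat k - (γ / N k) • Matrix.vecMulVec
      ((Θhat (k + 1) - Θhat k).mulVec (φ k) + ε (k + 1)) (φ k))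
    (hinit : Ξhat 0 = Θhat 0) :
    let α := 2 * (1 - γ) - γ * (2 - 3 * β) ^ 2 / (β * (2 - (1 + γ ^ 2) * β))
    ∀ k,
      ((∑ i, ∑ j, (Ξhat (k + 1) - Θstar) i j ^ 2)
          + ∑ i, ∑ j, (Θhat (k + 1) - Ξhat (k + 1)) i j ^ 2)
        - ((∑ i, ∑ j, (Ξhat k - Θstar) i j ^ 2)
          + ∑ i, ∑ j, (Θhat k - Ξhat k) i j ^ 2)
        ≤ -(γ * α * (1 - γ * β) ^ 2 * (2 / (2 + α)))
            * ((∑ i, ε (k + 1) i ^ 2) / N k) ∧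
      -(γ * α * (1 - γ * β) ^ 2 * (2 / (2 + α)))
          * ((∑ i, ε (k + 1) i ^ 2) / N k) ≤ 0 := by
  intro α k
  have hαdef : α = 2 * (1 - γ) - γ * (2 - 3 * β) ^ 2 / (β * (2 - (1 + γ ^ 2) * β)) := rfl
  set x := φ k with hx0
  set e := ε (k + 1) with he0
  set nn := N k with hn0'
  set P := ∑ j, x j ^ 2 with hP0
  -- basic facts
  have hnmax : nn = max μ P := by rw [hn0', hP0, hx0]; exact hN k
  have hp0 : (0:ℝ) ≤ P := by rw [hP0]; exact Finset.sum_nonneg fun j _ => sq_nonneg _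
  have hnpos : 0 < nn := lt_of_lt_of_le hμ (hnmax ▸ le_max_left _ _)
  have hpn : P ≤ nn := hnmax ▸ le_max_right _ _
  set ι := nn⁻¹ with hι0'
  have hι : 0 < ι := inv_pos.2 hnpos
  have hnι : nn * ι = 1 := mul_inv_cancel₀ (ne_of_gt hnpos)
  have hpι : P * ι ≤ 1 := by
    rw [← hnι]; exact mul_le_mul_of_nonneg_right hpn hι.le
  -- parameter facts
  have hγ2 : γ ^ 2 < (2 - β) / β := by
    have h := (Real.lt_sqrt hγ0.le).mp hγ; exact h
  have hγ2β : γ ^ 2 * β < 2 - β := (lt_div_iff₀ hβ0).mp hγ2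
  set dd := β * (2 - (1 + γ ^ 2) * β) with hdd0
  have hdd : 0 < dd := by rw [hdd0]; nlinarith
  have hgb1 : γ * β < 1 := by nlinarith [sq_nonneg (γ * β - 1), sq_nonneg (1 - β)]
  have hα0 : 0 < α := hα
  have h2α : (0:ℝ) < 2 + α := by linarith
  have hαd : α * dd = 2 * (1 - γ) * dd - γ * (2 - 3 * β) ^ 2 := by
    rw [hαdef, sub_mul, div_mul_cancel₀ _ hdd.ne']
  -- pointwise description of e
  have he : ∀ i, e i = ∑ j, (Θhat k - Θstar) i j * x j := by
    intro i
    rw [he0, hε k, ← hx0]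
    simp [Matrix.mulVec, dotProduct]
  -- the auxiliary vectors
  set t := fun i => ∑ j, (Θhat k - Ξhat k) i j * x j with ht0
  set h := fun i => t i - γ * β * ι * P * e i with hh0
  set w := fun i => (1 - γ * β * P * ι) * e i - β * h i with hw0
  set UU := fun (i : Fin m) (j : Fin q) =>
    (Θhat k - Ξhat k) i j - γ * β * ι * (e i * x j) with hUU0
  -- matrix entry identities
  have hTbar : ∀ i j', Θbar k i j' = Θhat k i j' - γ * β * ι * (e i * x j') := by
    intro i j'
    rw [hΘbar k, ← he0, ← hx0, ← hn0']
    simp only [Matrix.sub_apply, Matrix.smul_apply, Matrix.vecMulVec_apply, smul_eq_mul]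
    rw [div_eq_mul_inv, ← hι0']
  have hTp : ∀ i j', Θhat (k + 1) i j'
      = (1 - β) * (Θhat k i j' - γ * β * ι * (e i * x j')) + β * Ξhat k i j' := by
    intro i j'
    rw [hΘ k]
    simp only [Matrix.sub_apply, Matrix.smul_apply, smul_eq_mul, hTbar]
    ring
  have hwv : ∀ i, ((Θhat (k + 1) - Θhat k).mulVec x) i + e i = w i := by
    intro i
    have h2 : ((Θhat (k + 1) - Θhat k).mulVec x) i
        = ∑ j, (Θhat (k + 1) - Θhat k) i j * x j := by
      simp [Matrix.mulVec, dotProduct]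
    have h1 : ∀ j, (Θhat (k + 1) - Θhat k) i j * x j
        = (-β) * ((Θhat k - Ξhat k) i j * x j) + ((β - 1) * (γ * β * ι) * e i) * (x j ^ 2) := by
      intro j
      simp only [Matrix.sub_apply, hTp]
      ring
    rw [h2, Finset.sum_congr rfl fun j _ => h1 j,
      sum_comb2 (fun j => (Θhat k - Ξhat k) i j * x j) (fun j => x j ^ 2)]
    simp only [hw0, hh0, ht0, hP0]
    ring
  have hXie : ∀ i j', (Ξhat (k + 1) - Θstar) i j'
      = (Ξhat k - Θstar) i j' + (-(γ * ι)) * (w i * x j') := by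
    intro i j'
    rw [Matrix.sub_apply, Matrix.sub_apply, hΞ k, ← he0, ← hx0, ← hn0']
    simp only [Matrix.sub_apply, Matrix.smul_apply, Matrix.vecMulVec_apply, smul_eq_mul,
      Pi.add_apply]
    rw [hwv i, div_eq_mul_inv, ← hι0']
    ring
  have hTXe : ∀ i j', (Θhat (k + 1) - Ξhat (k + 1)) i j'
      = (1 - β) * UU i j' + (γ * ι) * (w i * x j') := by
    intro i j'
    rw [Matrix.sub_apply, hΞ k, ← he0, ← hx0, ← hn0']
    simp only [Matrix.sub_apply, Matrix.smul_apply, Matrix.vecMulVec_apply, smul_eq_mul,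
      Pi.add_apply, hTp, hUU0]
    rw [hwv i, div_eq_mul_inv, ← hι0']
    ring
  -- row sums of UU
  have hux : ∀ i, (∑ j, UU i j * x j) = h i := by
    intro i
    have h1 : ∀ j, UU i j * x j
        = 1 * ((Θhat k - Ξhat k) i j * x j) + (-(γ * β * ι * e i)) * (x j ^ 2) := by
      intro j; simp only [hUU0]; ring
    rw [Finset.sum_congr rfl fun j _ => h1 j,
      sum_comb2 (fun j => (Θhat k - Ξhat k) i j * x j) (fun j => x j ^ 2)]
    simp only [hh0, ht0, hP0]
    ring
  -- nonnegativity
  have ha0 : (0:ℝ) ≤ ∑ i, e i ^ 2 := Finset.sum_nonneg fun i _ => sq_nonneg _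
  have hH0 : (0:ℝ) ≤ ∑ i, h i ^ 2 := Finset.sum_nonneg fun i _ => sq_nonneg _
  have hW0 : (0:ℝ) ≤ ∑ i, w i ^ 2 := Finset.sum_nonneg fun i _ => sq_nonneg _
  have hU0 : (0:ℝ) ≤ ∑ i, ∑ j, UU i j ^ 2 :=
    Finset.sum_nonneg fun i _ => Finset.sum_nonneg fun j _ => sq_nonneg _
  -- Cauchy–Schwarz rows: H ≤ U' * P
  have hCS2 : (∑ i, h i ^ 2) ≤ (∑ i, ∑ j, UU i j ^ 2) * P := by
    rw [hP0, Finset.sum_mul]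
    refine Finset.sum_le_sum fun i _ => ?_
    rw [← hux i]
    exact Finset.sum_mul_sq_le_sq_mul_sq _ _ _
  -- square-sum facts
  have hSQ1 : (0:ℝ) ≤ (∑ i, ∑ j, UU i j ^ 2) + 2 * (P * ι ^ 2) * (∑ i, e i * h i)
      + (P * ι ^ 2) ^ 2 * (∑ i, e i ^ 2) * P := by
    have h0 : (0:ℝ) ≤ ∑ i, ∑ j, (UU i j + (P * ι ^ 2) * (e i * x j)) ^ 2 :=
      Finset.sum_nonneg fun i _ => Finset.sum_nonneg fun j _ => sq_nonneg _
    have hexp := sum_fro_expand UU e x (P * ι ^ 2)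
    simp only [hux] at hexp
    rw [hexp, ← hP0] at h0
    exact h0
  have hSQ2 : (0:ℝ) ≤ (γ * (2 - 3 * β)) * (γ * (2 - 3 * β)) * (∑ i, w i ^ 2)
      + ((γ * (2 - 3 * β)) * (-dd) + (-dd) * (γ * (2 - 3 * β))) * (∑ i, w i * h i)
      + (-dd) * (-dd) * (∑ i, h i ^ 2) := by
    rw [← sum_bilin w h (γ * (2 - 3 * β)) (-dd) (γ * (2 - 3 * β)) (-dd)]
    exact Finset.sum_nonneg fun i _ => mul_self_nonneg _
  have hSQ3 : (0:ℝ) ≤ α * α * (∑ i, w i ^ 2)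
      + (α * (-(2 * β)) + (-(2 * β)) * α) * (∑ i, w i * h i)
      + (-(2 * β)) * (-(2 * β)) * (∑ i, h i ^ 2) := by
    rw [← sum_bilin w h α (-(2 * β)) α (-(2 * β))]
    exact Finset.sum_nonneg fun i _ => mul_self_nonneg _
  -- scalar relations
  have hswrel : (∑ i, w i * h i)
      = (1 - γ * β * P * ι) * (∑ i, e i * h i) - β * (∑ i, h i ^ 2) := by
    have h0 : ∀ i, w i * h i
        = ((1 - γ * β * P * ι) * e i + (-β) * h i) * ((0:ℝ) * e i + 1 * h i) := by
      intro i; simp only [hw0]; ring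
    rw [Finset.sum_congr rfl fun i _ => h0 i, sum_bilin]
    ring
  have hE7a : (∑ i, w i ^ 2) + 2 * β * (∑ i, w i * h i) + β ^ 2 * (∑ i, h i ^ 2)
      = (1 - γ * β * P * ι) ^ 2 * (∑ i, e i ^ 2) := by
    calc (∑ i, w i ^ 2) + 2 * β * (∑ i, w i * h i) + β ^ 2 * (∑ i, h i ^ 2)
        = 1 * (∑ i, w i ^ 2) + (2 * β) * (∑ i, w i * h i) + β ^ 2 * (∑ i, h i ^ 2) := by ring
      _ = ∑ i, (1 * (w i ^ 2) + (2 * β) * (w i * h i) + β ^ 2 * (h i ^ 2)) :=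
          (sum_comb3 (fun i => w i ^ 2) (fun i => w i * h i) (fun i => h i ^ 2) 1 (2 * β)
            (β ^ 2)).symm
      _ = ∑ i, ((1 - γ * β * P * ι) ^ 2 * (e i ^ 2)) :=
          Finset.sum_congr rfl fun i _ => by simp only [hw0]; ring
      _ = (1 - γ * β * P * ι) ^ 2 * (∑ i, e i ^ 2) := (Finset.mul_sum _ _ _).symm
  have hmid : ∀ i, (∑ j, (Ξhat k - Θstar) i j * x j) = w i + (β - 1) * h i := by
    intro i
    have h1 : ∀ j, (Ξhat k - Θstar) i j * x j
        = 1 * ((Θhat k - Θstar) i j * x j) + (-1) * ((Θhat k - Ξhat k) i j * x j) := by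
      intro j; simp only [Matrix.sub_apply]; ring
    rw [Finset.sum_congr rfl fun j _ => h1 j,
      sum_comb2 (fun j => (Θhat k - Θstar) i j * x j) (fun j => (Θhat k - Ξhat k) i j * x j),
      ← he i]
    simp only [hw0, hh0, ht0]
    ring
  have hm1 : (∑ i, w i * (∑ j, (Ξhat k - Θstar) i j * x j))
      = (∑ i, w i ^ 2) + (β - 1) * (∑ i, w i * h i) := by
    have h0 : ∀ i, w i * (∑ j, (Ξhat k - Θstar) i j * x j)
        = (1 * w i + 0 * h i) * (1 * w i + (β - 1) * h i) := by
      intro i; rw [hmid i]; ring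
    rw [Finset.sum_congr rfl fun i _ => h0 i, sum_bilin]
    ring
  -- the four Frobenius expansions
  have hB1 : (∑ i, ∑ j, (Ξhat (k + 1) - Θstar) i j ^ 2)
      = (∑ i, ∑ j, (Ξhat k - Θstar) i j ^ 2)
        - 2 * γ * ι * ((∑ i, w i ^ 2) + (β - 1) * (∑ i, w i * h i))
        + γ ^ 2 * ι ^ 2 * (∑ i, w i ^ 2) * P := by
    calc (∑ i, ∑ j, (Ξhat (k + 1) - Θstar) i j ^ 2)
        = ∑ i, ∑ j, ((Ξhat k - Θstar) i j + (-(γ * ι)) * (w i * x j)) ^ 2 :=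
          Finset.sum_congr rfl fun i _ => Finset.sum_congr rfl fun j _ => by rw [hXie i j]
      _ = (∑ i, ∑ j, (Ξhat k - Θstar) i j ^ 2)
            + 2 * (-(γ * ι)) * (∑ i, w i * (∑ j, (Ξhat k - Θstar) i j * x j))
            + (-(γ * ι)) ^ 2 * (∑ i, w i ^ 2) * (∑ j, x j ^ 2) :=
          sum_fro_expand (fun i j => (Ξhat k - Θstar) i j) w x (-(γ * ι))
      _ = _ := by rw [hm1, ← hP0]; ring
  have hB2 : (∑ i, ∑ j, (Θhat (k + 1) - Ξhat (k + 1)) i j ^ 2)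
      = (1 - β) ^ 2 * (∑ i, ∑ j, UU i j ^ 2)
        + 2 * γ * ι * (1 - β) * (∑ i, w i * h i)
        + γ ^ 2 * ι ^ 2 * (∑ i, w i ^ 2) * P := by
    have hVV : ∀ i, (∑ j, ((1 - β) * UU i j) * x j) = (1 - β) * h i := by
      intro i
      rw [← hux i, Finset.mul_sum]
      exact Finset.sum_congr rfl fun j _ => by ring
    have hUU2 : (∑ i, ∑ j, ((1 - β) * UU i j) ^ 2)
        = (1 - β) ^ 2 * (∑ i, ∑ j, UU i j ^ 2) := by
      rw [Finset.mul_sum]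
      refine Finset.sum_congr rfl fun i _ => ?_
      rw [Finset.mul_sum]
      exact Finset.sum_congr rfl fun j _ => by ring
    calc (∑ i, ∑ j, (Θhat (k + 1) - Ξhat (k + 1)) i j ^ 2)
        = ∑ i, ∑ j, ((1 - β) * UU i j + (γ * ι) * (w i * x j)) ^ 2 :=
          Finset.sum_congr rfl fun i _ => Finset.sum_congr rfl fun j _ => by rw [hTXe i j]
      _ = (∑ i, ∑ j, ((1 - β) * UU i j) ^ 2)
            + 2 * (γ * ι) * (∑ i, w i * (∑ j, ((1 - β) * UU i j) * x j))
            + (γ * ι) ^ 2 * (∑ i, w i ^ 2) * (∑ j, x j ^ 2) :=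
          sum_fro_expand (fun i j => (1 - β) * UU i j) w x (γ * ι)
      _ = _ := by
          simp only [hVV]
          rw [hUU2, ← hP0]
          have : (∑ i, w i * ((1 - β) * h i)) = (1 - β) * (∑ i, w i * h i) := by
            rw [Finset.mul_sum]; exact Finset.sum_congr rfl fun i _ => by ring
          rw [this]; ring
  have hA2 : (∑ i, ∑ j, (Θhat k - Ξhat k) i j ^ 2)
      = (∑ i, ∑ j, UU i j ^ 2) + 2 * (γ * β * ι) * (∑ i, e i * h i)
        + (γ * β * ι) ^ 2 * (∑ i, e i ^ 2) * P := by
    calc (∑ i, ∑ j, (Θhat k - Ξhat k) i j ^ 2)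
        = ∑ i, ∑ j, (UU i j + (γ * β * ι) * (e i * x j)) ^ 2 :=
          Finset.sum_congr rfl fun i _ => Finset.sum_congr rfl fun j _ => by
            simp only [hUU0]; ring
      _ = (∑ i, ∑ j, UU i j ^ 2) + 2 * (γ * β * ι) * (∑ i, e i * (∑ j, UU i j * x j))
            + (γ * β * ι) ^ 2 * (∑ i, e i ^ 2) * (∑ j, x j ^ 2) :=
          sum_fro_expand UU e x (γ * β * ι)
      _ = _ := by simp only [hux, ← hP0]
  -- the exact expression for the Lyapunov difference
  have Hident : ((∑ i, ∑ j, (Ξhat (k + 1) - Θstar) i j ^ 2)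
        + ∑ i, ∑ j, (Θhat (k + 1) - Ξhat (k + 1)) i j ^ 2)
      - ((∑ i, ∑ j, (Ξhat k - Θstar) i j ^ 2) + ∑ i, ∑ j, (Θhat k - Ξhat k) i j ^ 2)
      = -(2 * γ * ι) * (1 - γ * P * ι) * (∑ i, w i ^ 2)
        + 2 * γ * (2 - 3 * β) * ι * (∑ i, w i * h i)
        - (2 * β - β ^ 2) * (∑ i, ∑ j, UU i j ^ 2)
        - 2 * γ * β ^ 2 * ι * (∑ i, h i ^ 2)
        - 2 * γ ^ 2 * β ^ 2 * P * ι ^ 2 * (∑ i, e i * h i)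
        - γ ^ 2 * β ^ 2 * P * ι ^ 2 * (∑ i, e i ^ 2) := by
    rw [hB1, hB2, hA2]
    linear_combination (2 * γ * β * ι) * hswrel
  clear_value α x e nn P ι t h w UU dd
  -- helper inequalities for the main estimate
  have hpι1 : 0 ≤ 1 - P * ι := by linarith only [hpι]
  have hUHι : (∑ i, h i ^ 2) * ι ≤ ∑ i, ∑ j, UU i j ^ 2 := by
    have f1 := mul_le_mul_of_nonneg_right hCS2 hι.le
    have f2 := mul_le_mul_of_nonneg_left hpι hU0
    linarith only [f1, f2]
  have G1 : 0 ≤ γ ^ 2 * ι * (1 - P * ι) * ((∑ i, w i ^ 2) * dd) :=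
    mul_nonneg (mul_nonneg (by positivity) hpι1) (mul_nonneg hW0 hdd.le)
  have G2 : 0 ≤ ι * ((γ * (2 - 3 * β)) * (γ * (2 - 3 * β)) * (∑ i, w i ^ 2)
      + ((γ * (2 - 3 * β)) * (-dd) + (-dd) * (γ * (2 - 3 * β))) * (∑ i, w i * h i)
      + (-dd) * (-dd) * (∑ i, h i ^ 2)) := mul_nonneg hι.le hSQ2
  have G3 : 0 ≤ (γ ^ 2 * β ^ 2 * dd) * ((∑ i, ∑ j, UU i j ^ 2)
      + 2 * (P * ι ^ 2) * (∑ i, e i * h i)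
      + (P * ι ^ 2) ^ 2 * (∑ i, e i ^ 2) * P) :=
    mul_nonneg (by positivity) hSQ1
  have G4 : 0 ≤ dd ^ 2 * ((∑ i, ∑ j, UU i j ^ 2) - (∑ i, h i ^ 2) * ι) :=
    mul_nonneg (by positivity) (by linarith only [hUHι])
  have G5 : 0 ≤ γ ^ 2 * β ^ 2 * P * ι ^ 2 * (∑ i, e i ^ 2) * dd * ((1 - P * ι) * (1 + P * ι)) :=
    mul_nonneg (by positivity)
      (mul_nonneg hpι1 (by linarith only [mul_nonneg hp0 hι.le]))
  have hαdW : γ * ι * (α * dd) * (∑ i, w i ^ 2)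
      = 2 * γ * (1 - γ) * ι * dd * (∑ i, w i ^ 2)
        - γ ^ 2 * (2 - 3 * β) ^ 2 * ι * (∑ i, w i ^ 2) := by
    linear_combination (γ * ι * (∑ i, w i ^ 2)) * hαd
  have MAIN : ((∑ i, ∑ j, (Ξhat (k + 1) - Θstar) i j ^ 2)
        + ∑ i, ∑ j, (Θhat (k + 1) - Ξhat (k + 1)) i j ^ 2)
      - ((∑ i, ∑ j, (Ξhat k - Θstar) i j ^ 2) + ∑ i, ∑ j, (Θhat k - Ξhat k) i j ^ 2)
      ≤ -(γ * ι) * (α * (∑ i, w i ^ 2) + 2 * β ^ 2 * (∑ i, h i ^ 2)) := by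
    rw [Hident, ← mul_le_mul_iff_right₀ hdd]
    have hddU : (2 * β - β ^ 2) * (dd * (∑ i, ∑ j, UU i j ^ 2))
        = dd ^ 2 * (∑ i, ∑ j, UU i j ^ 2) + γ ^ 2 * β ^ 2 * (dd * (∑ i, ∑ j, UU i j ^ 2)) := by
      linear_combination (-(dd * (∑ i, ∑ j, UU i j ^ 2))) * hdd0
    linarith only [G1, G2, G3, G4, G5, hαdW, hddU]
  -- final Young step
  have hgb2 : γ * β * P * ι ≤ γ * β := by
    have f := mul_le_mul_of_nonneg_left hpι (le_of_lt (mul_pos hγ0 hβ0))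
    linarith only [f]
  have hb : (1 - γ * β) ^ 2 ≤ (1 - γ * β * P * ι) ^ 2 := by
    have h2' : (0:ℝ) ≤ 1 - γ * β := by linarith only [hgb1]
    exact pow_le_pow_left₀ h2' (by linarith only [hgb2]) 2
  have hE7a2 : 2 * α * ((1 - γ * β * P * ι) ^ 2 * (∑ i, e i ^ 2))
      = 2 * α * ((∑ i, w i ^ 2) + 2 * β * (∑ i, w i * h i) + β ^ 2 * (∑ i, h i ^ 2)) := by
    linear_combination (-2 * α) * hE7a
  have hE7 : 2 * α * (1 - γ * β) ^ 2 * (∑ i, e i ^ 2)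
      ≤ (2 + α) * (α * (∑ i, w i ^ 2) + 2 * β ^ 2 * (∑ i, h i ^ 2)) := by
    have h1 : (1 - γ * β) ^ 2 * (∑ i, e i ^ 2)
        ≤ (1 - γ * β * P * ι) ^ 2 * (∑ i, e i ^ 2) :=
      mul_le_mul_of_nonneg_right hb ha0
    have h1' := mul_le_mul_of_nonneg_left h1 (by linarith only [hα0] : (0:ℝ) ≤ 2 * α)
    linarith only [h1', hE7a2, hSQ3]
  constructor
  · have hgoalRHS : -(γ * α * (1 - γ * β) ^ 2 * (2 / (2 + α))) * ((∑ i, e i ^ 2) / nn)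
        = (-(2 * γ * α * (1 - γ * β) ^ 2 * ((∑ i, e i ^ 2) * ι))) / (2 + α) := by
      rw [hι0']
      field_simp
    rw [hgoalRHS, le_div_iff₀ h2α]
    linarith only [mul_le_mul_of_nonneg_right MAIN h2α.le,
      mul_le_mul_of_nonneg_left hE7 (mul_nonneg hγ0.le hι.le)]
  · have hc1 : 0 ≤ γ * α * (1 - γ * β) ^ 2 * (2 / (2 + α)) :=
      mul_nonneg (mul_nonneg (mul_nonneg hγ0.le hα0.le) (sq_nonneg _))
        (div_nonneg (by norm_num) h2α.le)
    have hc2 : 0 ≤ (∑ i, e i ^ 2) / nn := div_nonneg ha0 hnpos.le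
    linarith only [mul_nonneg hc1 hc2]
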